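/- Let E be a directed graph. The path space E* ∪ E^∞ (with the cylinder-set topology generated by sets Z(μ∖G), μ ∈ E*, G ⊆ s(μ)E¹ finite) is locally compact. -/

import Mathlib

structure DirectedGraph where
  V : Type
  E : Type
  r : E → V
  s : E → V

namespace DirectedGraph

variable {G : DirectedGraph}

/-- A finite path: a list of edges `μ₁ … μₙ` with `s μᵢ = r μᵢ₊₁`, together with its
range vertex (which is the range of the first edge when the path is nonempty, and is
the defining datum of the path when the path has length zero, i.e. is a vertex). -/
structure FinPath (G : DirectedGraph) where
  vtx : G.V
  edges : List G.E
  chain : edges.Chain' fun e f => G.s e = G.r f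
  hv : ∀ e ∈ edges.head?, G.r e = vtx

/-- An infinite path `μ₁μ₂…` with `s μᵢ = r μᵢ₊₁`. -/
structure InfPath (G : DirectedGraph) where
  edge : ℕ → G.E
  chain : ∀ n, G.s (edge n) = G.r (edge (n + 1))

/-- The path space `E* ∪ E^∞`. -/
abbrev PathSpace (G : DirectedGraph) := FinPath G ⊕ InfPath G

namespace FinPath

def length (μ : FinPath G) : ℕ := μ.edges.length

def range (μ : FinPath G) : G.V := μ.vtx

def source (μ : FinPath G) : G.V := (μ.edges.getLast?).elim μ.vtx G.s

/-- A vertex, regarded as a path of length zero. -/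
def ofVertex (G : DirectedGraph) (v : G.V) : FinPath G :=
  ⟨v, [], List.IsChain.nil, by simp⟩

/-- `μ.Extends ν` means `μ = νν′` for some path `ν′`. -/
def Extends (μ ν : FinPath G) : Prop := μ.vtx = ν.vtx ∧ ν.edges <+: μ.edges

end FinPath

def InfPath.range (x : InfPath G) : G.V := G.r (x.edge 0)

/-- `x.Extends ν` means the infinite path `x` is of the form `νx′`. -/
def InfPath.Extends (x : InfPath G) (ν : FinPath G) : Prop :=
  (ν.edges = [] → x.range = ν.vtx) ∧
  ∀ i, (h : i < ν.edges.length) → x.edge i = ν.edges.get ⟨i, h⟩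

/-- The cylinder set `Z(μ) = {w ∈ E* ∪ E^∞ : w = μw′}`. -/
def Cyl (μ : FinPath G) : Set (PathSpace G) :=
  {w | match w with
       | Sum.inl lam => lam.Extends μ
       | Sum.inr x => x.Extends μ}

/-- The cylinder set `Z(μe)` of the path `μ` followed by the edge `e`. -/
def CylSnoc (μ : FinPath G) (e : G.E) : Set (PathSpace G) :=
  {w | match w with
       | Sum.inl lam => (μ.edges ++ [e]) <+: lam.edges
       | Sum.inr x => ∀ i, (h : i < (μ.edges ++ [e]).length) →
           x.edge i = (μ.edges ++ [e]).get ⟨i, h⟩}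

/-- `Z(μ∖G) := Z(μ) ∖ ⋃_{e ∈ G} Z(μe)`. -/
def CylMinus (μ : FinPath G) (GS : Finset G.E) : Set (PathSpace G) :=
  Cyl μ \ ⋃ e ∈ GS, CylSnoc μ e

/-- The basic sets `Z(μ∖G)` for `μ ∈ E*` and `G ⊆ s(μ)E¹` finite. -/
def basicSets (G : DirectedGraph) : Set (Set (PathSpace G)) :=
  {S | ∃ (μ : FinPath G) (GS : Finset G.E),
        (∀ e ∈ GS, G.r e = μ.source) ∧ S = CylMinus μ GS}

end DirectedGraph

open Set TopologicalSpace OnePoint Filter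

namespace DirectedGraph

attribute [local instance] Classical.propDecidable

variable {G : DirectedGraph}

theorem head?_mem_get {α : Type*} {l : List α} {e : α} (he : e ∈ l.head?) :
    ∃ h0 : 0 < l.length, l.get ⟨0, h0⟩ = e := by
  cases l with
  | nil => simp at he
  | cons a t =>
    simp only [List.head?, Option.mem_some_iff] at he
    exact ⟨Nat.succ_pos _, he⟩

theorem FinPath.ext' {μ ν : FinPath G} (h1 : μ.vtx = ν.vtx) (h2 : μ.edges = ν.edges) :
    μ = ν := by
  obtain ⟨v, l, c, h⟩ := μ
  obtain ⟨v', l', c', h'⟩ := ν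
  dsimp at h1 h2
  subst h1; subst h2; rfl

theorem InfPath.ext' {x y : InfPath G} (h : ∀ n, x.edge n = y.edge n) : x = y := by
  obtain ⟨e, c⟩ := x
  obtain ⟨e', c'⟩ := y
  have : e = e' := funext h
  subst this; rfl

instance instTopE (G : DirectedGraph) : TopologicalSpace G.E := ⊥

instance instDiscE (G : DirectedGraph) : DiscreteTopology G.E := ⟨rfl⟩

instance instTopPathSpace (G : DirectedGraph) : TopologicalSpace (PathSpace G) :=
  TopologicalSpace.generateFrom (basicSets G)

noncomputable def getE {X : Type} (x : OnePoint X) (h : x ≠ ∞) : X :=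
  (OnePoint.ne_infty_iff_exists.mp h).choose

theorem getE_spec {X : Type} (x : OnePoint X) (h : x ≠ ∞) : ((getE x h : X) : OnePoint X) = x :=
  (OnePoint.ne_infty_iff_exists.mp h).choose_spec

theorem getE_eq {X : Type} {x : OnePoint X} {h : x ≠ ∞} {e : X} (hx : x = (e : OnePoint X)) :
    getE x h = e :=
  OnePoint.coe_injective (by rw [getE_spec, hx])

/-- The closed "candidate path" set in the compact product space. -/
def KSet (μ : FinPath G) : Set (ℕ → OnePoint G.E) :=
  {f | (∀ i (hi : i < μ.edges.length), f i = ((μ.edges.get ⟨i, hi⟩ : G.E) : OnePoint G.E))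
     ∧ (∀ (n : ℕ) (e e' : G.E), f n = (e : OnePoint G.E) → f (n + 1) = (e' : OnePoint G.E) →
          G.s e = G.r e')
     ∧ (∀ e : G.E, f 0 = (e : OnePoint G.E) → G.r e = μ.vtx)}

theorem isClopen_coord (i : ℕ) (e : G.E) :
    IsClopen {f : ℕ → OnePoint G.E | f i = (e : OnePoint G.E)} := by
  have h : IsClopen {(e : OnePoint G.E)} := by
    refine ⟨isClosed_singleton, ?_⟩
    have := OnePoint.isOpenMap_coe (X := G.E) {e} (isOpen_discrete _)
    simpa using this
  exact h.preimage (continuous_apply i)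

theorem isClosed_KSet (μ : FinPath G) : IsClosed (KSet μ) := by
  have h1 : IsClosed {f : ℕ → OnePoint G.E |
      ∀ i (hi : i < μ.edges.length), f i = ((μ.edges.get ⟨i, hi⟩ : G.E) : OnePoint G.E)} := by
    have he : {f : ℕ → OnePoint G.E |
        ∀ i (hi : i < μ.edges.length), f i = ((μ.edges.get ⟨i, hi⟩ : G.E) : OnePoint G.E)} =
        ⋂ i : Fin μ.edges.length,
          {f : ℕ → OnePoint G.E | f i.1 = ((μ.edges.get i : G.E) : OnePoint G.E)} := by
      ext f
      simp only [mem_setOf_eq, mem_iInter]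
      exact ⟨fun h i => h i.1 i.2, fun h i hi => h ⟨i, hi⟩⟩
    rw [he]
    exact isClosed_iInter fun i => (isClopen_coord _ _).isClosed
  have h2 : IsClosed {f : ℕ → OnePoint G.E |
      ∀ (n : ℕ) (e e' : G.E), f n = (e : OnePoint G.E) → f (n + 1) = (e' : OnePoint G.E) →
        G.s e = G.r e'} := by
    have he : {f : ℕ → OnePoint G.E |
        ∀ (n : ℕ) (e e' : G.E), f n = (e : OnePoint G.E) → f (n + 1) = (e' : OnePoint G.E) →
          G.s e = G.r e'} =
        ⋂ n : ℕ, {f : ℕ → OnePoint G.E |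
          ∀ (e e' : G.E), f n = (e : OnePoint G.E) → f (n + 1) = (e' : OnePoint G.E) →
            G.s e = G.r e'} := by
      ext f; simp only [mem_setOf_eq, mem_iInter]
    rw [he]
    refine isClosed_iInter fun n => ?_
    rw [← isOpen_compl_iff]
    have hc : {f : ℕ → OnePoint G.E |
        ∀ (e e' : G.E), f n = (e : OnePoint G.E) → f (n + 1) = (e' : OnePoint G.E) →
          G.s e = G.r e'}ᶜ =
        ⋃ (p : G.E × G.E) (_ : G.s p.1 ≠ G.r p.2),
          ({f : ℕ → OnePoint G.E | f n = (p.1 : OnePoint G.E)} ∩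
           {f : ℕ → OnePoint G.E | f (n + 1) = (p.2 : OnePoint G.E)}) := by
      ext f
      simp only [mem_compl_iff, mem_setOf_eq, mem_iUnion, mem_inter_iff]
      push_neg
      constructor
      · rintro ⟨e, e', h1', h2', h3'⟩; exact ⟨(e, e'), h3', h1', h2'⟩
      · rintro ⟨⟨e, e'⟩, h3', h1', h2'⟩; exact ⟨e, e', h1', h2', h3'⟩
    rw [hc]
    exact isOpen_iUnion fun p => isOpen_iUnion fun _ =>
      ((isClopen_coord n p.1).isOpen.inter (isClopen_coord (n + 1) p.2).isOpen)
  have h3 : IsClosed {f : ℕ → OnePoint G.E |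
      ∀ e : G.E, f 0 = (e : OnePoint G.E) → G.r e = μ.vtx} := by
    rw [← isOpen_compl_iff]
    have hc : {f : ℕ → OnePoint G.E | ∀ e : G.E, f 0 = (e : OnePoint G.E) → G.r e = μ.vtx}ᶜ =
        ⋃ (e : G.E) (_ : G.r e ≠ μ.vtx), {f : ℕ → OnePoint G.E | f 0 = (e : OnePoint G.E)} := by
      ext f
      simp only [mem_compl_iff, mem_setOf_eq, mem_iUnion]
      push_neg
      tauto
    rw [hc]
    exact isOpen_iUnion fun e => isOpen_iUnion fun _ => (isClopen_coord 0 e).isOpen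
  have : KSet μ = _ ∩ (_ ∩ _) := rfl
  exact (h1.inter (h2.inter h3))

theorem isCompact_KSet (μ : FinPath G) : IsCompact (KSet μ) :=
  (isClosed_KSet μ).isCompact

/-- The truncation map from candidate sequences to paths. -/
noncomputable def TMap (μ : FinPath G) (f : KSet μ) : PathSpace G :=
  if h : ∃ n, f.1 n = (∞ : OnePoint G.E) then
    Sum.inl
      { vtx := μ.vtx
        edges := List.ofFn fun i : Fin (Nat.find h) => getE (f.1 i.1) (Nat.find_min h i.2)
        chain := by
          show List.IsChain _ _
          rw [List.isChain_iff_getElem]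
          intro i hi
          simp only [List.length_ofFn] at hi
          simp only [List.getElem_ofFn]
          exact f.2.2.1 i _ _ (getE_spec _ _).symm (getE_spec _ _).symm
        hv := by
          intro e he
          obtain ⟨h0, hg⟩ := head?_mem_get he
          rw [List.get_ofFn] at hg
          apply f.2.2.2 e
          rw [← hg]
          exact (getE_spec _ _).symm }
  else
    Sum.inr
      { edge := fun n => getE (f.1 n) (by push_neg at h; exact h n)
        chain := fun n => f.2.2.1 n _ _ (getE_spec _ _).symm (getE_spec _ _).symm }

def vtxOf : PathSpace G → G.V
  | Sum.inl lam => lam.vtx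
  | Sum.inr x => x.range

/-- The set of paths beginning with the edge list `l`. -/
def PrefSet (l : List G.E) : Set (PathSpace G) :=
  {w | match w with
       | Sum.inl lam => l <+: lam.edges
       | Sum.inr x => ∀ i (h : i < l.length), x.edge i = l.get ⟨i, h⟩}

theorem cylSnoc_eq (μ : FinPath G) (e : G.E) : CylSnoc μ e = PrefSet (μ.edges ++ [e]) := rfl

theorem hv_get (ν : FinPath G) (h : 0 < ν.edges.length) :
    G.r (ν.edges.get ⟨0, h⟩) = ν.vtx := by
  obtain ⟨a, t, hl⟩ : ∃ a t, ν.edges = a :: t := by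
    cases h' : ν.edges with
    | nil => rw [h'] at h; simp at h
    | cons a t => exact ⟨a, t, rfl⟩
  have h1 := ν.hv a (by rw [hl]; rfl)
  have h2 : ν.edges.get ⟨0, h⟩ = a := by
    simp [hl]
  rw [h2]; exact h1

theorem cyl_eq (ν : FinPath G) :
    Cyl ν = PrefSet ν.edges ∩ {w | vtxOf w = ν.vtx} := by
  ext w
  cases w with
  | inl lam =>
    show lam.Extends ν ↔ _
    simp only [FinPath.Extends, PrefSet, vtxOf, Set.mem_inter_iff, Set.mem_setOf_eq]
    tauto
  | inr x =>
    show x.Extends ν ↔ _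
    simp only [InfPath.Extends, PrefSet, vtxOf, Set.mem_inter_iff, Set.mem_setOf_eq]
    constructor
    · rintro ⟨h1, h2⟩
      refine ⟨h2, ?_⟩
      rcases Nat.eq_zero_or_pos ν.edges.length with h0 | h0
      · exact h1 (List.length_eq_zero_iff.mp h0)
      · have := hv_get ν h0
        rw [← this, ← h2 0 h0]
        rfl
    · rintro ⟨h2, h1⟩
      exact ⟨fun _ => h1, h2⟩

theorem mem_prefSet_TMap (μ : FinPath G) (f : KSet μ) (l : List G.E) :
    TMap μ f ∈ PrefSet l ↔
      ∀ i (hi : i < l.length), f.1 i = ((l.get ⟨i, hi⟩ : G.E) : OnePoint G.E) := by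
  by_cases h : ∃ n, f.1 n = (∞ : OnePoint G.E)
  · rw [TMap, dif_pos h]
    show (l <+: _) ↔ _
    constructor
    · intro hpre i hi
      have hlen := hpre.length_le
      simp only [List.length_ofFn] at hlen
      have hiN : i < Nat.find h := lt_of_lt_of_le hi hlen
      have hget : l.get ⟨i, hi⟩ =
          (List.ofFn fun j : Fin (Nat.find h) => getE (f.1 j.1) (Nat.find_min h j.2)).get
            ⟨i, by simpa using hiN⟩ := by
        simp only [List.get_eq_getElem]
        exact hpre.getElem hi
      rw [hget, List.get_ofFn]
      exact (getE_spec _ _).symm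
    · intro hc
      have hlen : l.length ≤ Nat.find h := by
        rw [Nat.le_find_iff]
        intro m hm
        rw [hc m hm]
        exact OnePoint.coe_ne_infty _
      rw [List.prefix_iff_eq_take]
      apply List.ext_get
      · simp [hlen]
      · intro n h1 h2
        simp only [List.get_eq_getElem, List.getElem_take, List.getElem_ofFn]
        exact (getE_eq (hc n h1)).symm
  · rw [TMap, dif_neg h]
    show (∀ i (hi : i < l.length), _) ↔ _
    constructor
    · intro hc i hi
      rw [← hc i hi]
      exact (getE_spec _ (by push_neg at h; exact h i)).symm
    · intro hc i hi
      exact getE_eq (h := by push_neg at h; exact h i) (hc i hi)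

theorem vtxOf_TMap (μ : FinPath G) (f : KSet μ) : vtxOf (TMap μ f) = μ.vtx := by
  by_cases h : ∃ n, f.1 n = (∞ : OnePoint G.E)
  · rw [TMap, dif_pos h]; rfl
  · rw [TMap, dif_neg h]
    show G.r _ = μ.vtx
    exact f.2.2.2 _ (getE_spec _ (by push_neg at h; exact h 0)).symm

theorem isClopen_pre_pref (μ : FinPath G) (l : List G.E) :
    IsClopen (TMap μ ⁻¹' PrefSet l) := by
  have he : TMap μ ⁻¹' PrefSet l =
      ⋂ i : Fin l.length,
        {f : KSet μ | f.1 i.1 = ((l.get i : G.E) : OnePoint G.E)} := by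
    ext f
    rw [Set.mem_preimage, mem_prefSet_TMap]
    simp only [mem_iInter, mem_setOf_eq]
    exact ⟨fun h i => h i.1 i.2, fun h i hi => h ⟨i, hi⟩⟩
  rw [he]
  have hcl : ∀ i : Fin l.length,
      IsClopen {f : KSet μ | f.1 i.1 = ((l.get i : G.E) : OnePoint G.E)} := by
    intro i
    exact (isClopen_coord i.1 (l.get i)).preimage continuous_subtype_val
  exact ⟨isClosed_iInter fun i => (hcl i).isClosed,
    isOpen_iInter_of_finite fun i => (hcl i).isOpen⟩

theorem continuous_TMap (μ : FinPath G) : Continuous (TMap μ) := by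
  refine continuous_generateFrom_iff.mpr ?_
  rintro S ⟨ν, GS, hGS, rfl⟩
  rw [CylMinus, Set.preimage_diff]
  apply IsOpen.sdiff
  · rw [cyl_eq, Set.preimage_inter]
    apply IsOpen.inter
    · exact (isClopen_pre_pref μ ν.edges).isOpen
    · have he : TMap μ ⁻¹' {w | vtxOf w = ν.vtx} =
          if μ.vtx = ν.vtx then (univ : Set (KSet μ)) else ∅ := by
        ext f
        rw [Set.mem_preimage, Set.mem_setOf_eq, vtxOf_TMap]
        split_ifs with h <;> simp [h]
      rw [he]
      split_ifs <;> [exact isOpen_univ; exact isOpen_empty]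
  · rw [Set.preimage_iUnion₂]
    apply Set.Finite.isClosed_biUnion (GS.finite_toSet)
    intro e _
    rw [cylSnoc_eq]
    exact (isClopen_pre_pref μ (ν.edges ++ [e])).isClosed

theorem range_TMap (μ : FinPath G) : Set.range (TMap μ) = Cyl μ := by
  apply Set.Subset.antisymm
  · rintro w ⟨f, rfl⟩
    rw [cyl_eq]
    exact ⟨(mem_prefSet_TMap μ f μ.edges).mpr f.2.1, vtxOf_TMap μ f⟩
  · intro w hw
    cases w with
    | inl lam =>
      obtain ⟨hv, hpre⟩ : lam.vtx = μ.vtx ∧ μ.edges <+: lam.edges := hw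
      obtain ⟨f0, hf0⟩ : ∃ f0 : ℕ → OnePoint G.E, ∀ n, f0 n =
          if hn : n < lam.edges.length then ((lam.edges.get ⟨n, hn⟩ : G.E) : OnePoint G.E)
          else ∞ := ⟨_, fun n => rfl⟩
      have hfin : ∀ n (hn : n < lam.edges.length),
          f0 n = ((lam.edges.get ⟨n, hn⟩ : G.E) : OnePoint G.E) := by
        intro n hn; rw [hf0 n, dif_pos hn]
      have hinf : ∀ n, ¬ n < lam.edges.length → f0 n = ∞ := by
        intro n hn; rw [hf0 n, dif_neg hn]
      have hmem : f0 ∈ KSet μ := by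
        refine ⟨?_, ?_, ?_⟩
        · intro i hi
          have hi' : i < lam.edges.length := lt_of_lt_of_le hi hpre.length_le
          rw [hfin i hi']
          congr 1
          simp only [List.get_eq_getElem]
          exact (hpre.getElem hi).symm
        · intro n e e' h1 h2
          by_cases hn : n < lam.edges.length
          · rw [hfin n hn] at h1
            by_cases hn1 : n + 1 < lam.edges.length
            · rw [hfin (n + 1) hn1] at h2
              have he : lam.edges.get ⟨n, hn⟩ = e := OnePoint.coe_injective h1
              have he' : lam.edges.get ⟨n + 1, hn1⟩ = e' := OnePoint.coe_injective h2
              rw [← he, ← he']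
              exact List.isChain_iff_getElem.mp lam.chain n (by omega)
            · rw [hinf (n + 1) hn1] at h2
              exact absurd h2.symm (OnePoint.coe_ne_infty e')
          · rw [hinf n hn] at h1
            exact absurd h1.symm (OnePoint.coe_ne_infty e)
        · intro e h1
          by_cases h0 : 0 < lam.edges.length
          · rw [hfin 0 h0] at h1
            have he : lam.edges.get ⟨0, h0⟩ = e := OnePoint.coe_injective h1
            rw [← he, hv_get lam h0]
            exact hv
          · rw [hinf 0 h0] at h1
            exact absurd h1.symm (OnePoint.coe_ne_infty e)
      refine ⟨⟨f0, hmem⟩, ?_⟩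
      have hex : ∃ n, (⟨f0, hmem⟩ : KSet μ).1 n = (∞ : OnePoint G.E) :=
        ⟨lam.edges.length, hinf _ (lt_irrefl _)⟩
      rw [TMap, dif_pos hex]
      have hN : Nat.find hex = lam.edges.length := by
        apply le_antisymm
        · exact Nat.find_min' hex (hinf _ (lt_irrefl _))
        · rw [Nat.le_find_iff]
          intro m hm
          show ¬ f0 m = ∞
          rw [hfin m hm]
          exact OnePoint.coe_ne_infty _
      congr 1
      refine FinPath.ext' ?_ ?_
      · exact hv.symm
      · apply List.ext_get
        · simp [hN]
        · intro n h1 h2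
          simp only [List.get_eq_getElem, List.getElem_ofFn]
          apply getE_eq
          show f0 n = _
          have hn : n < lam.edges.length := h2
          rw [hfin n hn]
          rfl
    | inr x =>
      obtain ⟨h1, h2⟩ : (μ.edges = [] → x.range = μ.vtx) ∧
          ∀ i (h : i < μ.edges.length), x.edge i = μ.edges.get ⟨i, h⟩ := hw
      obtain ⟨f0, hf0⟩ : ∃ f0 : ℕ → OnePoint G.E,
          ∀ n, f0 n = ((x.edge n : G.E) : OnePoint G.E) := ⟨_, fun n => rfl⟩
      have hmem : f0 ∈ KSet μ := by
        refine ⟨?_, ?_, ?_⟩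
        · intro i hi
          rw [hf0 i, h2 i hi]
        · intro n e e' he he'
          rw [hf0 n] at he
          rw [hf0 (n + 1)] at he'
          have h3 : x.edge n = e := OnePoint.coe_injective he
          have h4 : x.edge (n + 1) = e' := OnePoint.coe_injective he'
          rw [← h3, ← h4]
          exact x.chain n
        · intro e he
          rw [hf0 0] at he
          have h3 : x.edge 0 = e := OnePoint.coe_injective he
          rw [← h3]
          rcases Nat.eq_zero_or_pos μ.edges.length with h0 | h0
          · have := h1 (List.length_eq_zero_iff.mp h0)
            rw [← this]; rfl
          · rw [h2 0 h0]
            exact hv_get μ h0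
      refine ⟨⟨f0, hmem⟩, ?_⟩
      have hne : ¬ ∃ n, (⟨f0, hmem⟩ : KSet μ).1 n = (∞ : OnePoint G.E) := by
        push_neg
        intro n
        show f0 n ≠ ∞
        rw [hf0 n]
        exact OnePoint.coe_ne_infty _
      rw [TMap, dif_neg hne]
      congr 1
      apply InfPath.ext'
      intro n
      exact getE_eq (h := fun hc => hne ⟨n, hc⟩) (hf0 n)

theorem isCompact_cyl (μ : FinPath G) : IsCompact (Cyl μ) := by
  haveI : CompactSpace (KSet μ) := isCompact_iff_compactSpace.mp (isCompact_KSet μ)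
  rw [← range_TMap μ]
  exact isCompact_range (continuous_TMap μ)

def snocPath (μ : FinPath G) (e : G.E) (he : G.r e = μ.source) : FinPath G where
  vtx := μ.vtx
  edges := μ.edges ++ [e]
  chain := by
    show List.IsChain _ _
    rw [List.isChain_append]
    refine ⟨μ.chain, List.isChain_singleton e, ?_⟩
    intro a ha b hb
    simp only [List.head?, Option.mem_some_iff] at hb
    subst hb
    have hs : μ.source = G.s a := by
      rw [FinPath.source, Option.mem_def.mp ha]
      rfl
    exact (he.trans hs).symm
  hv := by
    intro a ha
    cases hl : μ.edges with
    | nil =>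
      rw [hl] at ha
      simp only [List.nil_append, List.head?, Option.mem_some_iff] at ha
      subst ha
      rw [he, FinPath.source, hl]
      rfl
    | cons b t =>
      rw [hl] at ha
      simp only [List.cons_append, List.head?, Option.mem_some_iff] at ha
      subst ha
      exact μ.hv _ (by rw [hl]; rfl)

theorem cylSnoc_eq_cyl (μ : FinPath G) (e : G.E) (he : G.r e = μ.source) :
    CylSnoc μ e = Cyl (snocPath μ e he) := by
  rw [cylSnoc_eq, cyl_eq]
  have hed : (snocPath μ e he).edges = μ.edges ++ [e] := rfl
  have hvx : (snocPath μ e he).vtx = μ.vtx := rfl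
  rw [hed, hvx]
  apply Set.Subset.antisymm
  · intro w hwp
    refine ⟨hwp, ?_⟩
    have h0 : 0 < (μ.edges ++ [e]).length := by simp
    have hr0 : G.r ((μ.edges ++ [e]).get ⟨0, h0⟩) = μ.vtx := hv_get (snocPath μ e he) h0
    cases w with
    | inl lam =>
      have hpre : (μ.edges ++ [e]) <+: lam.edges := hwp
      have h0' : 0 < lam.edges.length := lt_of_lt_of_le h0 hpre.length_le
      show lam.vtx = μ.vtx
      rw [← hv_get lam h0']
      rw [← hr0]
      congr 1
      simp only [List.get_eq_getElem]
      exact (hpre.getElem h0).symm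
    | inr x =>
      show x.range = μ.vtx
      have := hwp 0 h0
      rw [← hr0, ← this]
      rfl
  · exact fun w hw => hw.1

theorem isOpen_cyl (ν : FinPath G) : IsOpen (Cyl ν) := by
  have he : Cyl ν = CylMinus ν ∅ := by simp [CylMinus]
  rw [he]
  exact isOpen_generateFrom_of_mem ⟨ν, ∅, by simp, rfl⟩

theorem isOpen_cylSnoc (μ : FinPath G) (e : G.E) (he : G.r e = μ.source) :
    IsOpen (CylSnoc μ e) := by
  rw [cylSnoc_eq_cyl μ e he]
  exact isOpen_cyl _

theorem isCompact_cylMinus (μ : FinPath G) (GS : Finset G.E)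
    (hGS : ∀ e ∈ GS, G.r e = μ.source) : IsCompact (CylMinus μ GS) :=
  (isCompact_cyl μ).diff (isOpen_biUnion fun e he => isOpen_cylSnoc μ e (hGS e he))

theorem prefSet_anti {l l' : List G.E} (h : l' <+: l) : PrefSet l ⊆ PrefSet l' := by
  intro w hw
  cases w with
  | inl lam => exact h.trans hw
  | inr x =>
    intro i hi
    have hw' : x.edge i = l.get ⟨i, lt_of_lt_of_le hi h.length_le⟩ :=
      hw i (lt_of_lt_of_le hi h.length_le)
    rw [hw']
    simp only [List.get_eq_getElem]
    exact (h.getElem hi).symm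

theorem prefix_of_mem {w : PathSpace G} {l l' : List G.E} (h : w ∈ PrefSet l)
    (h' : w ∈ PrefSet l') (hle : l'.length ≤ l.length) : l' <+: l := by
  cases w with
  | inl lam => exact List.prefix_of_prefix_length_le h' h hle
  | inr x =>
    rw [List.prefix_iff_eq_take]
    apply List.ext_get
    · simp [hle]
    · intro n h1 h2
      simp only [List.get_eq_getElem, List.getElem_take]
      have e1 := h' n h1
      have e2 := h n (lt_of_lt_of_le h1 hle)
      simp only [List.get_eq_getElem] at e1 e2
      rw [← e1, ← e2]

theorem coord_eq {w : PathSpace G} {l l' : List G.E} (hl : w ∈ PrefSet l)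
    (hl' : w ∈ PrefSet l') {i : ℕ} (hi : i < l.length) (hi' : i < l'.length) :
    l.get ⟨i, hi⟩ = l'.get ⟨i, hi'⟩ := by
  cases w with
  | inl lam =>
    have e1 : l <+: lam.edges := hl
    have e2 : l' <+: lam.edges := hl'
    simp only [List.get_eq_getElem]
    rw [e1.getElem hi, e2.getElem hi']
  | inr x =>
    rw [← hl i hi, ← hl' i hi']

theorem mem_prefSet_of_mem_cyl {w : PathSpace G} {ν : FinPath G} (h : w ∈ Cyl ν) :
    w ∈ PrefSet ν.edges := by
  rw [cyl_eq] at h; exact h.1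

theorem vtxOf_eq_of_mem_cyl {w : PathSpace G} {ν : FinPath G} (h : w ∈ Cyl ν) :
    vtxOf w = ν.vtx := by
  rw [cyl_eq] at h; exact h.2

/-- Directedness of the family of basic sets containing a given point. -/
theorem directed_aux {x : PathSpace G} {μ ν : FinPath G} {Gμ Gν : Finset G.E}
    (hlen : ν.edges.length ≤ μ.edges.length)
    (hμ : ∀ e ∈ Gμ, G.r e = μ.source) (hν : ∀ e ∈ Gν, G.r e = ν.source)
    (hxμ : x ∈ CylMinus μ Gμ) (hxν : x ∈ CylMinus ν Gν) :
    ∃ S ∈ basicSets G, x ∈ S ∧ S ⊆ CylMinus μ Gμ ∩ CylMinus ν Gν := by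
  have hxpμ : x ∈ PrefSet μ.edges := mem_prefSet_of_mem_cyl hxμ.1
  have hxpν : x ∈ PrefSet ν.edges := mem_prefSet_of_mem_cyl hxν.1
  have hpre : ν.edges <+: μ.edges := prefix_of_mem hxpμ hxpν hlen
  have hvtx : ν.vtx = μ.vtx := by
    rw [← vtxOf_eq_of_mem_cyl hxν.1, vtxOf_eq_of_mem_cyl hxμ.1]
  rcases eq_or_lt_of_le hlen with heq | hlt
  · -- equal lengths: μ = ν
    have hedges : ν.edges = μ.edges := hpre.eq_of_length heq
    have hμν : ν = μ := FinPath.ext' hvtx hedges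
    subst hμν
    refine ⟨CylMinus ν (Gμ ∪ Gν), ⟨ν, Gμ ∪ Gν, ?_, rfl⟩, ?_, ?_⟩
    · intro e hee
      rcases Finset.mem_union.mp hee with h | h
      · exact hμ e h
      · exact hν e h
    · refine ⟨hxμ.1, ?_⟩
      intro hc
      rcases Set.mem_iUnion₂.mp hc with ⟨e, hee, hwe⟩
      rcases Finset.mem_union.mp hee with h | h
      · exact hxμ.2 (Set.mem_iUnion₂.mpr ⟨e, h, hwe⟩)
      · exact hxν.2 (Set.mem_iUnion₂.mpr ⟨e, h, hwe⟩)
    · intro w hw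
      constructor
      · exact ⟨hw.1, fun hc => hw.2 (by
          rcases Set.mem_iUnion₂.mp hc with ⟨e, hee, hwe⟩
          exact Set.mem_iUnion₂.mpr ⟨e, Finset.mem_union_left _ hee, hwe⟩)⟩
      · exact ⟨hw.1, fun hc => hw.2 (by
          rcases Set.mem_iUnion₂.mp hc with ⟨e, hee, hwe⟩
          exact Set.mem_iUnion₂.mpr ⟨e, Finset.mem_union_right _ hee, hwe⟩)⟩
  · -- strictly shorter: CylMinus μ Gμ ⊆ CylMinus ν Gν
    refine ⟨CylMinus μ Gμ, ⟨μ, Gμ, hμ, rfl⟩, hxμ, ?_⟩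
    intro w hw
    refine ⟨hw, ?_, ?_⟩
    · -- w ∈ Cyl ν
      rw [cyl_eq]
      refine ⟨prefSet_anti hpre (mem_prefSet_of_mem_cyl hw.1), ?_⟩
      exact (vtxOf_eq_of_mem_cyl hw.1).trans hvtx.symm
    · -- w avoids the ν-side cylinders
      intro hc
      rcases Set.mem_iUnion₂.mp hc with ⟨e, hee, hwe⟩
      rw [cylSnoc_eq] at hwe
      have hwp : w ∈ PrefSet μ.edges := mem_prefSet_of_mem_cyl hw.1
      have hiν : ν.edges.length < (ν.edges ++ [e]).length := by simp
      have hce : μ.edges.get ⟨ν.edges.length, hlt⟩ =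
          (ν.edges ++ [e]).get ⟨ν.edges.length, hiν⟩ := coord_eq hwp hwe hlt hiν
      have hee' : (ν.edges ++ [e]).get ⟨ν.edges.length, hiν⟩ = e := by
        simp only [List.get_eq_getElem]
        exact List.getElem_concat_length rfl _
      have hsnocpre : (ν.edges ++ [e]) <+: μ.edges := by
        rw [List.prefix_iff_eq_take]
        apply List.ext_get
        · simp; omega
        · intro n h1 h2
          simp only [List.length_append, List.length_singleton] at h1
          simp only [List.get_eq_getElem, List.getElem_take]
          rcases lt_or_eq_of_le (Nat.lt_succ_iff.mp h1) with hn | hn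
          · rw [List.getElem_append_left hn]
            exact hpre.getElem hn
          · subst hn
            rw [List.getElem_concat_length rfl]
            have := hce.symm.trans rfl
            rw [hee'] at hce
            exact hce.symm
      have hxe : x ∈ CylSnoc ν e := by
        rw [cylSnoc_eq]
        exact prefSet_anti hsnocpre hxpμ
      exact hxν.2 (Set.mem_iUnion₂.mpr ⟨e, hee, hxe⟩)

theorem exists_basic_mem (x : PathSpace G) : ∃ S ∈ basicSets G, x ∈ S := by
  cases x with
  | inl lam =>
    refine ⟨CylMinus lam ∅, ⟨lam, ∅, by simp, rfl⟩, ?_⟩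
    refine ⟨?_, by simp⟩
    show lam.Extends lam
    exact ⟨rfl, List.prefix_refl _⟩
  | inr x =>
    refine ⟨CylMinus (FinPath.ofVertex G x.range) ∅,
      ⟨FinPath.ofVertex G x.range, ∅, by simp, rfl⟩, ?_⟩
    refine ⟨?_, by simp⟩
    show x.Extends (FinPath.ofVertex G x.range)
    exact ⟨fun _ => rfl, fun i hi => absurd hi (by simp [FinPath.ofVertex])⟩

theorem locallyCompact (G : DirectedGraph) : LocallyCompactSpace (PathSpace G) := by
  constructor
  intro x n hn
  have hnh : n ∈ @nhds _ (TopologicalSpace.generateFrom (basicSets G)) x := hn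
  rw [nhds_generateFrom] at hnh
  haveI : Nonempty {s : Set (PathSpace G) //
      s ∈ {t : Set (PathSpace G) | x ∈ t ∧ t ∈ basicSets G}} := by
    obtain ⟨S, hSb, hxS⟩ := exists_basic_mem x
    exact ⟨⟨S, hxS, hSb⟩⟩
  have hdir : Directed (· ≥ ·)
      fun S : {s : Set (PathSpace G) //
        s ∈ {t : Set (PathSpace G) | x ∈ t ∧ t ∈ basicSets G}} => (𝓟 S.1 : Filter _) := by
    rintro ⟨A, hxA, μ, Gμ, hμ, rfl⟩ ⟨B, hxB, ν, Gν, hν, rfl⟩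
    rcases le_total ν.edges.length μ.edges.length with hle | hle
    · obtain ⟨S, hSb, hxS, hsub⟩ := directed_aux hle hμ hν hxA hxB
      exact ⟨⟨S, hxS, hSb⟩, principal_mono.mpr (hsub.trans Set.inter_subset_left),
        principal_mono.mpr (hsub.trans Set.inter_subset_right)⟩
    · obtain ⟨S, hSb, hxS, hsub⟩ := directed_aux hle hν hμ hxB hxA
      exact ⟨⟨S, hxS, hSb⟩, principal_mono.mpr (hsub.trans Set.inter_subset_right),
        principal_mono.mpr (hsub.trans Set.inter_subset_left)⟩
  rw [iInf_subtype'] at hnh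
  rw [mem_iInf_of_directed hdir] at hnh
  obtain ⟨⟨S, hxS, hSb⟩, hnS⟩ := hnh
  refine ⟨S, ?_, hnS, ?_⟩
  · exact IsOpen.mem_nhds (isOpen_generateFrom_of_mem hSb) hxS
  · obtain ⟨μ, GS, hGS, rfl⟩ := hSb
    exact isCompact_cylMinus μ GS hGS

end DirectedGraph

open DirectedGraph in
/-- The path space of a countable directed graph, with the cylinder-set
topology, is locally compact. -/
theorem pathSpace_locallyCompact (G : DirectedGraph) [Countable G.V] [Countable G.E] :
    @LocallyCompactSpace (PathSpace G) (TopologicalSpace.generateFrom (basicSets G)) :=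
  DirectedGraph.locallyCompact G
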